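/- Let d be a random variable with density f_d(r) = 2r/(ρ² - ξ²) on [ξ, ρ] (distance of a uniformly distributed point on the annulus with radii ξ < ρ). Let Z be Gamma(L,1)-distributed, independent of d, and G > 0, α > 2. Then P(Z < G d^{2α}) = 1 - (1/(α(ρ²-ξ²) G^{1/α})) ∑_{m=0}^{L-1} [Γ(m + 1/α, G ξ^{2α}) - Γ(m + 1/α, G ρ^{2α})]/Γ(m+1). -/

import Mathlib

open Real Finset intervalIntegral MeasureTheory Set

/-- Lower incomplete gamma function. -/
noncomputable def lowerGamma (a x : ℝ) : ℝ := ∫ t in (0:ℝ)..x, t ^ (a - 1) * Real.exp (-t)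

/-- Upper incomplete gamma function. -/
noncomputable def upperGamma (a x : ℝ) : ℝ := ∫ t in Set.Ioi x, t ^ (a - 1) * Real.exp (-t)

/-- Idle probability of the DC-combiner: averaging the Gamma(L,1) CDF (of Z) at the
    threshold G d^{2α} over the distance density f_d(r) = 2r/(ρ²-ξ²) on [ξ,ρ] gives
    P(Z < G d^{2α}) = 1 - (1/(α(ρ²-ξ²)G^{1/α})) ∑_{m=0}^{L-1} [Γ(m+1/α,Gξ^{2α}) - Γ(m+1/α,Gρ^{2α})]/Γ(m+1). -/



lemma sum_deriv (L : ℕ) (t : ℝ) :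
    HasDerivAt (fun s : ℝ => ∑ m ∈ Finset.range L, s ^ m / m.factorial)
      (∑ m ∈ Finset.range L, (m : ℝ) * t ^ (m - 1) / m.factorial) t := by
  apply HasDerivAt.fun_sum
  intro m _
  exact (hasDerivAt_pow m t).div_const _

lemma lowerGamma_eq (L : ℕ) (hL : 0 < L) (x : ℝ) (hx : 0 ≤ x) :
    lowerGamma L x = Real.Gamma L *
      (1 - Real.exp (-x) * ∑ m ∈ Finset.range L, x ^ m / m.factorial) := by
  obtain ⟨K, rfl⟩ : ∃ K, L = K + 1 := ⟨L - 1, (Nat.succ_pred_eq_of_pos hL).symm⟩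
  have hΓ : Real.Gamma (K + 1 : ℕ) = K.factorial := by
    rw [Nat.cast_add, Nat.cast_one, Real.Gamma_nat_eq_factorial]
  -- antiderivative
  set F : ℝ → ℝ := fun s => (K.factorial : ℝ) *
      (1 - Real.exp (-s) * ∑ m ∈ Finset.range (K + 1), s ^ m / m.factorial) with hF
  have hderiv : ∀ t : ℝ, HasDerivAt F (t ^ K * Real.exp (-t)) t := by
    intro t
    have h1 : HasDerivAt (fun s : ℝ => Real.exp (-s)) (-Real.exp (-t)) t := by
      simpa using (hasDerivAt_neg t).exp
    have h2 := sum_deriv (K + 1) t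
    have h3 := (h1.mul h2).const_mul (K.factorial : ℝ)
    have h4 : HasDerivAt F
        (-((K.factorial : ℝ)) * ((-Real.exp (-t)) * (∑ m ∈ Finset.range (K+1), t ^ m / m.factorial)
          + Real.exp (-t) * ∑ m ∈ Finset.range (K+1), (m : ℝ) * t ^ (m - 1) / m.factorial)) t := by
      have : HasDerivAt (fun s : ℝ => (K.factorial : ℝ) * (Real.exp (-s) *
          ∑ m ∈ Finset.range (K + 1), s ^ m / m.factorial))
          ((K.factorial : ℝ) * ((-Real.exp (-t)) * (∑ m ∈ Finset.range (K+1), t ^ m / m.factorial)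
          + Real.exp (-t) * ∑ m ∈ Finset.range (K+1), (m : ℝ) * t ^ (m - 1) / m.factorial)) t :=
        h3
      have := (hasDerivAt_const t ((K.factorial : ℝ))).sub this
      rw [zero_sub] at this
      rw [neg_mul]
      refine this.congr_of_eventuallyEq (Filter.Eventually.of_forall fun s => ?_)
      rw [hF]; simp only [Pi.sub_apply]; ring
    convert h4 using 1
    have hsum : ∑ m ∈ Finset.range (K+1), (m : ℝ) * t ^ (m - 1) / m.factorial
        = ∑ m ∈ Finset.range K, t ^ m / m.factorial := by
      rw [Finset.sum_range_succ']
      simp only [Nat.cast_add, Nat.cast_one, Nat.cast_zero, zero_mul, zero_div, add_zero]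
      apply Finset.sum_congr rfl
      intro m _
      have : ((m + 1 : ℕ) : ℝ) ≠ 0 := by positivity
      field_simp [Nat.factorial_succ]
      simp only [show 1 + m - 1 = m by omega, show 1 + m = m + 1 by omega, Nat.factorial_succ]
      push_cast
      ring
    rw [hsum]
    have hsum2 : ∑ m ∈ Finset.range (K+1), t ^ m / m.factorial
        = (∑ m ∈ Finset.range K, t ^ m / m.factorial) + t ^ K / K.factorial := by
      rw [Finset.sum_range_succ]
    rw [hsum2]
    have hKfac : (K.factorial : ℝ) ≠ 0 := by positivity
    field_simp
    ring
  have key : ∫ t in (0:ℝ)..x, t ^ K * Real.exp (-t) = F x - F 0 := by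
    apply intervalIntegral.integral_eq_sub_of_hasDerivAt
    · intro t _
      exact hderiv t
    · apply Continuous.intervalIntegrable
      exact (continuous_pow K).mul (Real.continuous_exp.comp continuous_neg)
  have congr1 : lowerGamma (K + 1 : ℕ) x = ∫ t in (0:ℝ)..x, t ^ K * Real.exp (-t) := by
    unfold lowerGamma
    apply intervalIntegral.integral_congr
    intro t ht
    rw [Set.uIcc_of_le hx] at ht
    show t ^ (((K + 1 : ℕ) : ℝ) - 1) * Real.exp (-t) = t ^ K * Real.exp (-t)
    by_cases h0 : t = 0
    · subst h0
      by_cases hK : K = 0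
      · simp [hK]
      · have : ((K + 1 : ℕ) : ℝ) - 1 ≠ 0 := by
          have : (1:ℝ) ≤ K := by exact_mod_cast Nat.one_le_iff_ne_zero.mpr hK
          push_cast; linarith
        rw [Real.zero_rpow this, zero_pow hK, zero_mul]
    · have ht0 : 0 < t := lt_of_le_of_ne ht.1 (Ne.symm h0)
      have : ((K + 1 : ℕ) : ℝ) - 1 = (K : ℝ) := by push_cast; ring
      rw [this, Real.rpow_natCast]
  have hF0 : F 0 = 0 := by
    have : ∑ m ∈ Finset.range (K+1), (0:ℝ) ^ m / m.factorial = 1 := by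
      rw [Finset.sum_eq_single 0]
      · simp
      · intro m _ hm; rw [zero_pow hm]; simp
      · intro h; simp at h
    simp [hF, this]
  rw [congr1, key, hF0, hΓ, sub_zero, hF]


lemma integrable_upper {a x : ℝ} (ha : 0 < a) (hx : 0 < x) :
    IntegrableOn (fun t : ℝ => t ^ (a - 1) * Real.exp (-t)) (Set.Ioi x) := by
  have h := (Real.GammaIntegral_convergent ha).mono_set (Set.Ioi_subset_Ioi hx.le)
  exact h.congr_fun (fun t _ => mul_comm _ _) measurableSet_Ioi

lemma upper_diff {a x y : ℝ} (ha : 0 < a) (hx : 0 < x) (hxy : x ≤ y) :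
    upperGamma a x - upperGamma a y = ∫ t in x..y, t ^ (a - 1) * Real.exp (-t) := by
  have hxy' : 0 < y := lt_of_lt_of_le hx hxy
  have hsplit : Set.Ioi x = Set.Ioc x y ∪ Set.Ioi y := (Set.Ioc_union_Ioi_eq_Ioi hxy).symm
  have h1 : upperGamma a x = (∫ t in Set.Ioc x y, t ^ (a - 1) * Real.exp (-t)) + upperGamma a y := by
    unfold upperGamma
    rw [hsplit]
    exact setIntegral_union (Set.Ioc_disjoint_Ioi le_rfl) measurableSet_Ioi
      ((integrable_upper ha hx).mono_set (by rw [hsplit]; exact Set.subset_union_left))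
      (integrable_upper ha hxy')
  rw [h1, intervalIntegral.integral_of_le hxy]
  ring

lemma subst_int {G α : ℝ} (hG : 0 < G) (hα : 0 < α) (m : ℕ) {ξ ρ : ℝ}
    (hξ : 0 < ξ) (hξρ : ξ ≤ ρ) :
    ∫ r in ξ..ρ, Real.exp (-(G * r ^ (2*α))) * (G * r ^ (2*α)) ^ m * (2 * r)
      = (1 / (α * G ^ (1/α))) *
        ∫ t in (G * ξ ^ (2*α))..(G * ρ ^ (2*α)), t ^ ((m : ℝ) + 1/α - 1) * Real.exp (-t) := by
  have hα' : α ≠ 0 := ne_of_gt hα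
  set f : ℝ → ℝ := fun r => G * r ^ (2*α) with hf
  set f' : ℝ → ℝ := fun r => G * (2*α) * r ^ (2*α - 1) with hf'
  set g : ℝ → ℝ := fun t => (1 / (α * G ^ (1/α))) * (t ^ ((m : ℝ) + 1/α - 1) * Real.exp (-t))
    with hg
  have huIcc : Set.uIcc ξ ρ = Set.Icc ξ ρ := Set.uIcc_of_le hξρ
  have hpos : ∀ r ∈ Set.uIcc ξ ρ, 0 < r := by
    intro r hr; rw [huIcc] at hr; exact lt_of_lt_of_le hξ hr.1
  have hd : ∀ r ∈ Set.uIcc ξ ρ, HasDerivAt f (f' r) r := by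
    intro r hr
    have := (Real.hasDerivAt_rpow_const (p := 2*α) (Or.inl (ne_of_gt (hpos r hr)))).const_mul G
    simpa [hf, hf', mul_assoc] using this
  have hcf' : ContinuousOn f' (Set.uIcc ξ ρ) := by
    apply ContinuousOn.mul continuousOn_const
    exact ContinuousOn.rpow_const continuousOn_id (fun r hr => Or.inl (ne_of_gt (hpos r hr)))
  have hcg : ContinuousOn g (f '' Set.uIcc ξ ρ) := by
    apply ContinuousOn.mul continuousOn_const
    apply ContinuousOn.mul
    · apply ContinuousOn.rpow_const continuousOn_id
      intro t ht
      obtain ⟨r, hr, rfl⟩ := ht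
      left
      have : 0 < G * r ^ (2*α) := mul_pos hG (Real.rpow_pos_of_pos (hpos r hr) _)
      exact ne_of_gt this
    · exact (Real.continuous_exp.comp continuous_neg).continuousOn
  have key := intervalIntegral.integral_comp_smul_deriv' hd hcf' hcg
  have heq : ∀ r ∈ Set.uIcc ξ ρ,
      f' r • (g ∘ f) r = Real.exp (-(G * r ^ (2*α))) * (G * r ^ (2*α)) ^ m * (2 * r) := by
    intro r hr
    have hr0 : 0 < r := hpos r hr
    have hX : 0 < G * r ^ (2*α) := mul_pos hG (Real.rpow_pos_of_pos hr0 _)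
    have hGα : (0:ℝ) < G ^ (1/α) := Real.rpow_pos_of_pos hG _
    show (G * (2*α) * r ^ (2*α - 1)) * ((1 / (α * G ^ (1/α))) *
        ((G * r ^ (2*α)) ^ ((m : ℝ) + 1/α - 1) * Real.exp (-(G * r ^ (2*α)))))
      = Real.exp (-(G * r ^ (2*α))) * (G * r ^ (2*α)) ^ m * (2 * r)
    have e1 : (G * r ^ (2*α)) ^ ((m : ℝ) + 1/α - 1)
        = (G * r ^ (2*α)) ^ (m : ℕ) * (G ^ (1/α) * r ^ (2:ℝ)) / (G * r ^ (2*α)) := by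
      have h2 : 2 * α * (1/α) = 2 := by field_simp
      rw [Real.rpow_sub hX, Real.rpow_add hX, Real.rpow_natCast, Real.rpow_one,
        Real.mul_rpow hG.le (Real.rpow_pos_of_pos hr0 _).le, ← Real.rpow_mul hr0.le, h2]
    have e2 : r ^ (2*α - 1) = r ^ (2*α) / r := by
      rw [Real.rpow_sub hr0, Real.rpow_one]
    rw [e1, e2, Real.rpow_two]
    field_simp
  rw [intervalIntegral.integral_congr heq] at key
  rw [key]
  show (∫ t in (G * ξ ^ (2*α))..(G * ρ ^ (2*α)),
      (1 / (α * G ^ (1/α))) * (t ^ ((m : ℝ) + 1/α - 1) * Real.exp (-t))) = _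
  rw [intervalIntegral.integral_const_mul]


theorem dc_idle_probability (G α ξ ρ : ℝ) (L : ℕ) (hL : 0 < L) (hG : 0 < G)
    (hα : 2 < α) (hξ : 0 < ξ) (hξρ : ξ < ρ) :
    ∫ r in ξ..ρ, (lowerGamma L (G * r ^ (2 * α)) / Real.Gamma L) * (2 * r / (ρ ^ 2 - ξ ^ 2)) =
      1 - (1 / (α * (ρ ^ 2 - ξ ^ 2) * G ^ (1 / α))) *
        ∑ m ∈ Finset.range L,
          (upperGamma ((m : ℝ) + 1 / α) (G * ξ ^ (2 * α)) -
            upperGamma ((m : ℝ) + 1 / α) (G * ρ ^ (2 * α))) / Real.Gamma (m + 1) := by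
  have hα0 : 0 < α := by linarith
  have hα' : α ≠ 0 := ne_of_gt hα0
  set D : ℝ := ρ ^ 2 - ξ ^ 2 with hDdef
  have hD : 0 < D := by
    have : ξ ^ 2 < ρ ^ 2 := by nlinarith
    simpa [hDdef] using sub_pos.mpr this
  have hD' : D ≠ 0 := ne_of_gt hD
  clear_value D
  have hΓL : (0:ℝ) < Real.Gamma L := Real.Gamma_pos_of_pos (by exact_mod_cast hL)
  have hpos : ∀ r ∈ Set.uIcc ξ ρ, 0 < r := by
    intro r hr
    rw [Set.uIcc_of_le hξρ.le] at hr
    exact lt_of_lt_of_le hξ hr.1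
  -- the per-term integrand
  set h : ℕ → ℝ → ℝ := fun m r =>
    Real.exp (-(G * r ^ (2*α))) * (G * r ^ (2*α)) ^ m * (2 * r) with hh
  have hXcont : ContinuousOn (fun r : ℝ => G * r ^ (2*α)) (Set.uIcc ξ ρ) :=
    continuousOn_const.mul (ContinuousOn.rpow_const continuousOn_id
      (fun r hr => Or.inl (ne_of_gt (hpos r hr))))
  have hcont : ∀ m : ℕ, ContinuousOn (h m) (Set.uIcc ξ ρ) := by
    intro m
    exact ((Real.continuous_exp.comp_continuousOn hXcont.neg).mul (hXcont.pow m)).mul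
      (continuous_const.mul continuous_id).continuousOn
  have hint : ∀ m : ℕ, IntervalIntegrable (h m) volume ξ ρ :=
    fun m => (hcont m).intervalIntegrable
  -- Step 1 : rewrite the integrand
  have step1 : (∫ r in ξ..ρ, (lowerGamma L (G * r ^ (2 * α)) / Real.Gamma L) * (2 * r / D))
      = ∫ r in ξ..ρ, (2 * r / D - ∑ m ∈ Finset.range L, (1 / (m.factorial * D)) * h m r) := by
    apply intervalIntegral.integral_congr
    intro r hr
    have hr0 : 0 < r := hpos r hr
    have hX : (0:ℝ) ≤ G * r ^ (2*α) := (mul_pos hG (Real.rpow_pos_of_pos hr0 _)).le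
    show (lowerGamma L (G * r ^ (2 * α)) / Real.Gamma L) * (2 * r / D) = _
    rw [lowerGamma_eq L hL _ hX, mul_div_cancel_left₀ _ (ne_of_gt hΓL)]
    show _ = 2 * r / D - ∑ m ∈ Finset.range L, (1 / (↑m.factorial * D)) * h m r
    rw [sub_mul, one_mul, Finset.mul_sum, Finset.sum_mul]
    congr 1
    apply Finset.sum_congr rfl
    intro m _
    simp only [hh]
    rw [one_div, mul_inv]
    ring
  -- Step 2 : split the integral
  have base : (∫ r in ξ..ρ, 2 * r / D) = 1 := by
    have : ∀ r ∈ Set.uIcc ξ ρ, HasDerivAt (fun s : ℝ => s ^ 2 / D) (2 * r / D) r := by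
      intro r _
      have := (hasDerivAt_pow 2 r).div_const D
      simpa using this
    rw [intervalIntegral.integral_eq_sub_of_hasDerivAt this
      (((continuous_const.mul continuous_id).div_const D).intervalIntegrable _ _)]
    field_simp
    exact hDdef.symm
  have hf : IntervalIntegrable (fun r : ℝ => 2 * r / D) volume ξ ρ :=
    ((continuous_const.mul continuous_id).div_const D).intervalIntegrable _ _
  have hg : IntervalIntegrable
      (fun r : ℝ => ∑ m ∈ Finset.range L, (1 / (m.factorial * D)) * h m r) volume ξ ρ := by
    have heq : (fun r : ℝ => ∑ m ∈ Finset.range L, (1 / ((m.factorial : ℝ) * D)) * h m r)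
        = ∑ m ∈ Finset.range L, (fun r : ℝ => (1 / ((m.factorial : ℝ) * D)) * h m r) := by
      funext r
      simp [Finset.sum_apply]
    rw [heq]
    exact IntervalIntegrable.sum _ (fun m _ => ((hint m).const_mul _))
  have step2 : (∫ r in ξ..ρ, (2 * r / D - ∑ m ∈ Finset.range L, (1 / (m.factorial * D)) * h m r))
      = 1 - ∑ m ∈ Finset.range L, (1 / (m.factorial * D)) * ∫ r in ξ..ρ, h m r := by
    have key : (∫ r in ξ..ρ, (2 * r / D
          - ∑ m ∈ Finset.range L, (1 / (m.factorial * D)) * h m r))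
        = (∫ r in ξ..ρ, 2 * r / D)
          - ∫ r in ξ..ρ, ∑ m ∈ Finset.range L, (1 / (m.factorial * D)) * h m r :=
      intervalIntegral.integral_sub hf hg
    rw [key, base,
      intervalIntegral.integral_finset_sum (fun m _ => ((hint m).const_mul _))]
    congr 1
    exact Finset.sum_congr rfl fun m _ => intervalIntegral.integral_const_mul _ _
  -- Step 3 : substitution and upper gamma
  have hxy : G * ξ ^ (2*α) ≤ G * ρ ^ (2*α) :=
    mul_le_mul_of_nonneg_left (Real.rpow_le_rpow hξ.le hξρ.le (by positivity)) hG.le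
  have hx0 : 0 < G * ξ ^ (2*α) := mul_pos hG (Real.rpow_pos_of_pos hξ _)
  have step3 : ∀ m : ℕ, (∫ r in ξ..ρ, h m r) = (1 / (α * G ^ (1/α))) *
      (upperGamma ((m : ℝ) + 1/α) (G * ξ ^ (2*α)) - upperGamma ((m : ℝ) + 1/α) (G * ρ ^ (2*α))) := by
    intro m
    have ha : (0:ℝ) < (m : ℝ) + 1/α := by positivity
    rw [show (h m) = fun r => Real.exp (-(G * r ^ (2*α))) * (G * r ^ (2*α)) ^ m * (2 * r) from rfl,
      subst_int hG hα0 m hξ hξρ.le, upper_diff ha hx0 hxy]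
  rw [step1, step2]
  congr 1
  rw [Finset.mul_sum]
  apply Finset.sum_congr rfl
  intro m _
  rw [step3 m, Real.Gamma_nat_eq_factorial]
  have hm : (m.factorial : ℝ) ≠ 0 := by positivity
  have hGα : G ^ (1/α) ≠ 0 := ne_of_gt (Real.rpow_pos_of_pos hG _)
  set d := upperGamma ((m : ℝ) + 1/α) (G * ξ ^ (2*α))
    - upperGamma ((m : ℝ) + 1/α) (G * ρ ^ (2*α)) with hd
  rw [div_eq_mul_inv d]
  have hc : (1 / ((m.factorial : ℝ) * D)) * (1 / (α * G ^ (1/α)))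
      = (1 / (α * D * G ^ (1/α))) * ((m.factorial : ℝ))⁻¹ := by
    field_simp
  calc (1 / ((m.factorial : ℝ) * D)) * ((1 / (α * G ^ (1/α))) * d)
      = ((1 / ((m.factorial : ℝ) * D)) * (1 / (α * G ^ (1/α)))) * d := by ring
    _ = ((1 / (α * D * G ^ (1/α))) * ((m.factorial : ℝ))⁻¹) * d := by rw [hc]
    _ = (1 / (α * D * G ^ (1/α))) * (d * ((m.factorial : ℝ))⁻¹) := by ring
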